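/- Lipschitz continuity of history segments: In the linear delay framework below, there exists a constant M ≥ 1, depending only on the semigroup 𝒯, with the following property: for every (x,f) ∈ D(𝒢) such that f : [-1,0] → H is Lipschitz continuous with constant L, and every t ∈ [0,1], the history segment u_t = 𝒫₂𝒯(t)(x,f) is Lipschitz continuous on [-1,0] with constant max{L, M(‖(x,f)‖_ℰ + ‖𝒢(x,f)‖_ℰ)}. -/

import Mathlib

open MeasureTheory Filter Set

noncomputable section

/-- Lebesgue measure on `[-1,0]`. -/
def lam : Measure ℝ := volume.restrict (Set.Icc (-1) 0)

/-- Graph of the generator of a strongly continuous semigroup. -/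
def genGraph {E : Type*} [NormedAddCommGroup E] [NormedSpace ℝ E]
    (T : ℝ → E →L[ℝ] E) : Set (E × E) :=
  {q | Tendsto (fun t : ℝ => t⁻¹ • (T t q.1 - q.1)) (nhdsWithin 0 (Set.Ioi 0)) (nhds q.2)}

/-- A strongly continuous semigroup of bounded linear operators. -/
def IsC0Semigroup {E : Type*} [NormedAddCommGroup E] [NormedSpace ℝ E]
    (T : ℝ → E →L[ℝ] E) : Prop :=
  T 0 = 1 ∧ (∀ s, 0 ≤ s → ∀ t, 0 ≤ t → T (s + t) = (T s).comp (T t)) ∧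
    ∀ x, ContinuousOn (fun t => T t x) (Set.Ici (0:ℝ))

/-- A strongly continuous contraction semigroup. -/
def IsC0Contraction {E : Type*} [NormedAddCommGroup E] [NormedSpace ℝ E]
    (T : ℝ → E →L[ℝ] E) : Prop :=
  IsC0Semigroup T ∧ ∀ t, 0 ≤ t → ∀ x, ‖T t x‖ ≤ ‖x‖

variable {H : Type*} [NormedAddCommGroup H] [InnerProductSpace ℝ H] [CompleteSpace H]

/-- `F` is an absolutely continuous function on `[-1,0]` with derivative `F'` of class
`L^p`; this encodes membership of (the class of) `F` in `W^{1,p}([-1,0];H)`. -/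
def IsW1pRep (p : ℝ) (F F' : ℝ → H) : Prop :=
  MemLp F' (ENNReal.ofReal p) lam ∧
    ∀ σ ∈ Set.Icc (-1:ℝ) 0, F σ = F (-1) + ∫ s in Set.Icc (-1:ℝ) σ, F' s

/-- The state space `ℰ = H × L^p([-1,0];H)` of the delay equation. -/
abbrev DelayE (H : Type*) [NormedAddCommGroup H] (p : ℝ) :=
  H × Lp H (ENNReal.ofReal p) lam

/-- The delay operator `Φ F = ∫ k(σ) F(σ) dμ(σ)` (Riemann–Stieltjes operator in
total-variation-measure form). -/
def Phi (μ : Measure ℝ) (k : ℝ → H →L[ℝ] H) (F : ℝ → H) : H := ∫ σ, k σ (F σ) ∂μ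

/-- The `p`-product norm `‖(x,f)‖_ℰ = (‖x‖^p + ‖f‖_{L^p}^p)^{1/p}` on `ℰ`. -/
def Enorm (p : ℝ) (q : DelayE H p) : ℝ := (‖q.1‖ ^ p + ‖q.2‖ ^ p) ^ (1 / p)

/-- The graph of the delay operator matrix `𝒢(x,f) = (Bx + Φf, f')` with domain
`{(x,f) : x ∈ D(B), f ∈ W^{1,p}([-1,0];H), f(0) = x}`, where `B` is the generator
of the semigroup `V`. -/
def delayGraph (p : ℝ) (V : ℝ → H →L[ℝ] H) (μ : Measure ℝ) (k : ℝ → H →L[ℝ] H) :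
    Set (DelayE H p × DelayE H p) :=
  {q | ∃ F F' : ℝ → H,
    (∀ᵐ σ ∂lam, q.1.2 σ = F σ) ∧ (∀ᵐ σ ∂lam, q.2.2 σ = F' σ) ∧
    IsW1pRep p F F' ∧ F 0 = q.1.1 ∧
    (q.1.1, q.2.1 - Phi μ k F) ∈ genGraph V}

/-- The graph of the operator `𝒜₂(x,f) = (Φf, f')` with domain
`{(x,f) : f ∈ W^{1,p}([-1,0];H), f(0) = x}`. -/
def shiftGraph (p : ℝ) (μ : Measure ℝ) (k : ℝ → H →L[ℝ] H) :
    Set (DelayE H p × DelayE H p) :=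
  {q | ∃ F F' : ℝ → H,
    (∀ᵐ σ ∂lam, q.1.2 σ = F σ) ∧ (∀ᵐ σ ∂lam, q.2.2 σ = F' σ) ∧
    IsW1pRep p F F' ∧ F 0 = q.1.1 ∧ q.2.1 = Phi μ k F}

/-- The pointwise history segment `u_t` of the orbit of `(x,f) = q` under `T`:
`u_t(σ) = u(t+σ)` if `t+σ > 0` and `u_t(σ) = f(t+σ)` otherwise, where
`u(s) = 𝒫₁ T(s) q` and `F` is the chosen representative of `f`. -/
def histFun (p : ℝ) [Fact (1 ≤ ENNReal.ofReal p)]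
    (T : ℝ → DelayE H p →L[ℝ] DelayE H p) (q : DelayE H p) (F : ℝ → H)
    (t σ : ℝ) : H :=
  if 0 < t + σ then (T (t + σ) q).1 else F (t + σ)

/-- The semigroup `T` on `ℰ` satisfies the history (translation) formula. -/
def HistoryFormula (p : ℝ) [Fact (1 ≤ ENNReal.ofReal p)]
    (T : ℝ → DelayE H p →L[ℝ] DelayE H p) : Prop :=
  ∀ q : DelayE H p, ∀ t, 0 ≤ t → ∀ F : ℝ → H, (∀ᵐ σ ∂lam, q.2 σ = F σ) →
    ∀ᵐ σ ∂lam, (T t q).2 σ = histFun p T q F t σ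

/-- The smallest Lipschitz constant of `F` on `[-1,0]`. -/
def lipConst (F : ℝ → H) : ℝ :=
  sInf {L | 0 ≤ L ∧ ∀ σ₁ ∈ Set.Icc (-1:ℝ) 0, ∀ σ₂ ∈ Set.Icc (-1:ℝ) 0,
    ‖F σ₁ - F σ₂‖ ≤ L * |σ₁ - σ₂|}

/-- The Lipschitz norm `‖f‖_{Lip(H)} = sup_σ ‖F(σ)‖ + Lip(F)`. -/
def LipNormH (F : ℝ → H) : ℝ := (⨆ σ : Set.Icc (-1:ℝ) 0, ‖F (σ : ℝ)‖) + lipConst F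

/-- The `L^p([-1,0];H)` norm of a representative. -/
def LpNormOn (p : ℝ) (F : ℝ → H) : ℝ :=
  (∫ σ in Set.Icc (-1:ℝ) 0, ‖F σ‖ ^ p) ^ (1 / p)

/-- The `W^{1,p}([-1,0];H)` norm `‖f‖ = ‖f‖_{L^p} + ‖f'‖_{L^p}`. -/
def W1pNormH (p : ℝ) (F F' : ℝ → H) : ℝ := LpNormOn p F + LpNormOn p F'

/-- The `L^p([-1,0];D(B))` norm of a representative, computed through the graph norm
of `B` (the function `BF` records the pointwise values `B(F(σ))`). -/
def LpNormB (p : ℝ) (F BF : ℝ → H) : ℝ :=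
  (∫ σ in Set.Icc (-1:ℝ) 0, (‖F σ‖ + ‖BF σ‖) ^ p) ^ (1 / p)

/-- The `W^{1,p}([-1,0];D(B))` norm. -/
def W1pNormB (p : ℝ) (F F' BF BF' : ℝ → H) : ℝ := LpNormB p F BF + LpNormB p F' BF'

/-- Membership of `(x,f) = q` in the regularity class
`𝒟 = {(x,f) : x ∈ D(B²), f ∈ W^{1,p}([-1,0];D(B)), f Lipschitz into H, f(0) = x}`,
witnessed by a representative `F` of `f`, a representative `F'` of its derivative,
the pointwise values `BF = B∘F`, `BF' = B∘F'` and the vectors `Bx = Bx`, `B2x = B²x`,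
where `B` is the generator of `V`. -/
def DMem (p : ℝ) (V : ℝ → H →L[ℝ] H) (q : DelayE H p) (F F' BF BF' : ℝ → H)
    (Bx B2x : H) : Prop :=
  (∀ᵐ σ ∂lam, q.2 σ = F σ) ∧
  IsW1pRep p F F' ∧
  F 0 = q.1 ∧
  (q.1, Bx) ∈ genGraph V ∧ (Bx, B2x) ∈ genGraph V ∧
  (∀ σ ∈ Set.Icc (-1:ℝ) 0, (F σ, BF σ) ∈ genGraph V) ∧
  (∀ σ ∈ Set.Icc (-1:ℝ) 0, (F' σ, BF' σ) ∈ genGraph V) ∧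
  (∀ σ ∈ Set.Icc (-1:ℝ) 0, BF σ = BF (-1) + ∫ s in Set.Icc (-1:ℝ) σ, BF' s) ∧
  MemLp BF' (ENNReal.ofReal p) lam ∧
  (∃ L, 0 ≤ L ∧ ∀ σ₁ ∈ Set.Icc (-1:ℝ) 0, ∀ σ₂ ∈ Set.Icc (-1:ℝ) 0,
    ‖F σ₁ - F σ₂‖ ≤ L * |σ₁ - σ₂|)

/-- The norm `‖(x,f)‖_𝒟 = ‖x‖_B + ‖Bx‖_B + ‖f‖_{W^{1,p}(D(B))} + ‖f‖_{Lip(H)}`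
computed from the witnesses. -/
def DNorm (p : ℝ) (q : DelayE H p) (F F' BF BF' : ℝ → H) (Bx B2x : H) : ℝ :=
  (‖q.1‖ + ‖Bx‖) + (‖Bx‖ + ‖B2x‖) + W1pNormB p F F' BF BF' + LipNormH F

/-- Lipschitz continuity of history segments along the delay semigroup. -/
theorem history_segments_lipschitz
    {H : Type*} [NormedAddCommGroup H] [InnerProductSpace ℝ H] [CompleteSpace H]
    (p : ℝ) (hp : 1 < p) [Fact (1 ≤ ENNReal.ofReal p)]
    (V : ℝ → H →L[ℝ] H) (hV : IsC0Contraction V)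
    (hVdense : Dense {x : H | ∃ y, (x, y) ∈ genGraph V})
    (μ : Measure ℝ) [IsFiniteMeasure μ]
    (hμsupp : μ (Set.Icc (-1:ℝ) 0)ᶜ = 0) (hμatom : 0 < μ {(-1:ℝ)})
    (k : ℝ → H →L[ℝ] H)
    (hkmeas : ∀ x : H, MeasureTheory.StronglyMeasurable fun σ => k σ x)
    (hknorm : ∀ σ, ‖k σ‖ ≤ 1)
    (𝒯 : ℝ → DelayE H p →L[ℝ] DelayE H p)
    (h𝒯sg : IsC0Semigroup 𝒯)
    (hgen𝒯 : genGraph 𝒯 = delayGraph p V μ k)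
    (hhist : HistoryFormula p 𝒯) :
    ∃ M : ℝ, 1 ≤ M ∧
      ∀ q r : DelayE H p, (q, r) ∈ delayGraph p V μ k →
      ∀ F F' : ℝ → H, (∀ᵐ σ ∂lam, q.2 σ = F σ) → IsW1pRep p F F' → F 0 = q.1 →
      ∀ L : ℝ, 0 ≤ L →
      (∀ σ₁ ∈ Set.Icc (-1:ℝ) 0, ∀ σ₂ ∈ Set.Icc (-1:ℝ) 0,
        ‖F σ₁ - F σ₂‖ ≤ L * |σ₁ - σ₂|) →
      ∀ t ∈ Set.Icc (0:ℝ) 1, ∀ σ₁ ∈ Set.Icc (-1:ℝ) 0, ∀ σ₂ ∈ Set.Icc (-1:ℝ) 0,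
        ‖histFun p 𝒯 q F t σ₁ - histFun p 𝒯 q F t σ₂‖ ≤
          max L (M * (Enorm p q + Enorm p r)) * |σ₁ - σ₂| := by

  classical
  -- Uniform bound on ‖𝒯 t‖ for t ∈ [0,1] by Banach–Steinhaus
  obtain ⟨M₀, hM₀⟩ : ∃ M₀, ∀ i : Set.Icc (0:ℝ) 1, ‖𝒯 i‖ ≤ M₀ := by
    apply banach_steinhaus (g := fun i : Set.Icc (0:ℝ) 1 => 𝒯 i)
    intro x
    have hc : ContinuousOn (fun t : ℝ => ‖𝒯 t x‖) (Set.Icc (0:ℝ) 1) :=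
      ((h𝒯sg.2.2 x).mono (fun t ht => ht.1)).norm
    obtain ⟨C, hC⟩ := (isCompact_Icc (a := (0:ℝ)) (b := 1)).exists_bound_of_continuousOn hc
    exact ⟨C, fun i => by simpa using hC i i.2⟩
  have hM₀0 : 0 ≤ M₀ := by
    have h := hM₀ ⟨0, by norm_num⟩
    exact le_trans (norm_nonneg (𝒯 ((⟨0, by norm_num⟩ : Set.Icc (0:ℝ) 1) : ℝ))) h
  set M : ℝ := max 1 M₀ with hMdef
  refine ⟨M, le_max_left _ _, ?_⟩
  intro q r hqr F F' hF hW hF0 L hL hLip t ht σ₁ hσ₁ σ₂ hσ₂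
  have hqr' : (q, r) ∈ genGraph 𝒯 := by rw [hgen𝒯]; exact hqr
  -- Key: the orbit s ↦ 𝒯 s q is Lipschitz on [0,1] with constant M₀ * ‖r‖
  have key : ∀ s₁ s₂ : ℝ, 0 ≤ s₁ → s₁ ≤ s₂ → s₂ ≤ 1 →
      ‖𝒯 s₂ q - 𝒯 s₁ q‖ ≤ (M₀ * ‖r‖) * (s₂ - s₁) := by
    intro s₁ s₂ hs₁ hs₁₂ hs₂
    have hcont : ContinuousOn (fun s : ℝ => 𝒯 s q) (Set.Icc s₁ s₂) :=
      (h𝒯sg.2.2 q).mono (fun s hs => le_trans hs₁ hs.1)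
    have hderiv : ∀ x ∈ Set.Ico s₁ s₂,
        HasDerivWithinAt (fun s : ℝ => 𝒯 s q) (𝒯 x r) (Set.Ici x) x := by
      intro x hx
      have hx0 : (0:ℝ) ≤ x := le_trans hs₁ hx.1
      rw [hasDerivWithinAt_iff_tendsto_slope, Set.Ici_sdiff_left]
      have hmap : Tendsto (fun s : ℝ => s - x) (nhdsWithin x (Set.Ioi x))
          (nhdsWithin 0 (Set.Ioi 0)) := by
        apply tendsto_nhdsWithin_of_tendsto_nhds_of_eventually_within
        · have : Tendsto (fun s : ℝ => s - x) (nhds x) (nhds (x - x)) :=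
            (continuous_id.sub continuous_const).tendsto x
          simpa using this.mono_left nhdsWithin_le_nhds
        · exact Filter.eventually_of_mem self_mem_nhdsWithin (fun s hs => Set.mem_Ioi.2 (sub_pos.2 hs))
      have hcomp : Tendsto (fun s : ℝ => (𝒯 x) ((s - x)⁻¹ • (𝒯 (s - x) q - q)))
          (nhdsWithin x (Set.Ioi x)) (nhds (𝒯 x r)) :=
        ((𝒯 x).continuous.tendsto r).comp (hqr'.comp hmap)
      refine hcomp.congr' ?_
      filter_upwards [self_mem_nhdsWithin] with s hs
      have hsx : (0:ℝ) ≤ s - x := le_of_lt (sub_pos.2 hs)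
      have hsemi : 𝒯 s q = 𝒯 x (𝒯 (s - x) q) := by
        have := h𝒯sg.2.1 x hx0 (s - x) hsx
        have h' : 𝒯 (x + (s - x)) q = 𝒯 x (𝒯 (s - x) q) := by
          rw [this]; rfl
        simpa using h'
      rw [slope_def_module, (𝒯 x).map_smul, (𝒯 x).map_sub, ← hsemi]
    have hbound : ∀ x ∈ Set.Ico s₁ s₂, ‖𝒯 x r‖ ≤ M₀ * ‖r‖ := by
      intro x hx
      have hx01 : x ∈ Set.Icc (0:ℝ) 1 :=
        ⟨le_trans hs₁ hx.1, le_trans (le_of_lt hx.2) hs₂⟩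
      calc ‖𝒯 x r‖ ≤ ‖𝒯 x‖ * ‖r‖ := (𝒯 x).le_opNorm r
        _ ≤ M₀ * ‖r‖ := mul_le_mul_of_nonneg_right (hM₀ ⟨x, hx01⟩) (norm_nonneg _)
    have := norm_image_sub_le_of_norm_deriv_right_le_segment hcont hderiv hbound s₂
      ⟨hs₁₂, le_refl _⟩
    exact this
  -- norm bounds through Enorm
  have hEnonneg : ∀ w : DelayE H p, 0 ≤ Enorm p w := by
    intro w
    exact Real.rpow_nonneg (add_nonneg (Real.rpow_nonneg (norm_nonneg _) _)
      (Real.rpow_nonneg (norm_nonneg _) _)) _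
  have hp0 : (0:ℝ) < p := lt_trans one_pos hp
  have hnormE : ∀ w : DelayE H p, ‖w‖ ≤ Enorm p w := by
    intro w
    have haux : ∀ a b : ℝ, 0 ≤ a → 0 ≤ b → a ≤ (a ^ p + b ^ p) ^ (1/p) := by
      intro a b ha hb
      calc a = (a ^ p) ^ (1/p) := by
              rw [one_div, Real.rpow_rpow_inv ha (ne_of_gt hp0)]
        _ ≤ (a ^ p + b ^ p) ^ (1/p) :=
            Real.rpow_le_rpow (Real.rpow_nonneg ha _)
              (le_add_of_nonneg_right (Real.rpow_nonneg hb _)) (by positivity)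
    have h2 : ‖w.2‖ ≤ (‖w.1‖ ^ p + ‖w.2‖ ^ p) ^ (1/p) := by
      have := haux ‖w.2‖ ‖w.1‖ (norm_nonneg _) (norm_nonneg _)
      rwa [add_comm] at this
    rw [Prod.norm_def]
    exact max_le (haux _ _ (norm_nonneg _) (norm_nonneg _)) h2
  set C : ℝ := M * (Enorm p q + Enorm p r) with hCdef
  have hC0 : 0 ≤ C := mul_nonneg (le_trans zero_le_one (le_max_left _ _))
    (add_nonneg (hEnonneg q) (hEnonneg r))
  have hCkey : M₀ * ‖r‖ ≤ C := by
    apply mul_le_mul (le_max_right _ _) _ (norm_nonneg _)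
      (le_trans zero_le_one (le_max_left _ _))
    exact le_trans (hnormE r) (le_add_of_nonneg_left (hEnonneg q))
  -- the main claim for ordered σ₁ ≤ σ₂
  have main : ∀ σ₁ ∈ Set.Icc (-1:ℝ) 0, ∀ σ₂ ∈ Set.Icc (-1:ℝ) 0, σ₁ ≤ σ₂ →
      ‖histFun p 𝒯 q F t σ₁ - histFun p 𝒯 q F t σ₂‖ ≤ max L C * |σ₁ - σ₂| := by
    intro σ₁ hσ₁ σ₂ hσ₂ hle
    have ht0 : 0 ≤ t := ht.1
    have ht1 : t ≤ 1 := ht.2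
    have habs : |σ₁ - σ₂| = σ₂ - σ₁ := by rw [abs_sub_comm]; exact abs_of_nonneg (by linarith)
    have hLC : L ≤ max L C := le_max_left _ _
    have hCC : C ≤ max L C := le_max_right _ _
    by_cases h2 : 0 < t + σ₂
    · by_cases h1 : 0 < t + σ₁
      · -- both positive: orbit Lipschitz
        have hk := key (t + σ₁) (t + σ₂) (le_of_lt h1) (by linarith) (by linarith [hσ₂.2])
        simp only [histFun, if_pos h1, if_pos h2]
        have hfst : ‖(𝒯 (t + σ₁) q).1 - (𝒯 (t + σ₂) q).1‖ ≤ ‖𝒯 (t + σ₂) q - 𝒯 (t + σ₁) q‖ := by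
          rw [norm_sub_rev]
          exact le_trans (le_of_eq (by rw [Prod.fst_sub])) (norm_fst_le _)
        calc ‖(𝒯 (t + σ₁) q).1 - (𝒯 (t + σ₂) q).1‖
            ≤ (M₀ * ‖r‖) * (t + σ₂ - (t + σ₁)) := le_trans hfst hk
          _ ≤ C * (σ₂ - σ₁) := by
              apply mul_le_mul hCkey (by linarith) (by linarith) hC0
          _ ≤ max L C * |σ₁ - σ₂| := by
              rw [habs]; exact mul_le_mul_of_nonneg_right hCC (by linarith)
      · -- mixed: split at t + σ = 0
        push_neg at h1
        simp only [histFun, if_neg (not_lt.2 h1), if_pos h2]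
        have hm1 : t + σ₁ ∈ Set.Icc (-1:ℝ) 0 := ⟨by linarith [hσ₁.1], h1⟩
        have h0m : (0:ℝ) ∈ Set.Icc (-1:ℝ) 0 := by norm_num
        have hA : ‖F (t + σ₁) - F 0‖ ≤ L * (0 - (t + σ₁)) := by
          have := hLip (t + σ₁) hm1 0 h0m
          rwa [show |t + σ₁ - 0| = 0 - (t + σ₁) by rw [abs_sub_comm]; exact abs_of_nonneg (by linarith)] at this
        have hB : ‖q.1 - (𝒯 (t + σ₂) q).1‖ ≤ (M₀ * ‖r‖) * (t + σ₂) := by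
          have hk := key 0 (t + σ₂) (le_refl _) (le_of_lt h2) (by linarith [hσ₂.2])
          have h0 : 𝒯 0 q = q := by rw [h𝒯sg.1]; rfl
          rw [h0] at hk
          have hfst : ‖q.1 - (𝒯 (t + σ₂) q).1‖ ≤ ‖𝒯 (t + σ₂) q - q‖ := by
            rw [norm_sub_rev]
            exact le_trans (le_of_eq (by rw [Prod.fst_sub])) (norm_fst_le _)
          simpa using le_trans hfst hk
        calc ‖F (t + σ₁) - (𝒯 (t + σ₂) q).1‖
            ≤ ‖F (t + σ₁) - F 0‖ + ‖F 0 - (𝒯 (t + σ₂) q).1‖ := norm_sub_le_norm_sub_add_norm_sub _ _ _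
          _ ≤ L * (0 - (t + σ₁)) + (M₀ * ‖r‖) * (t + σ₂) := by
              rw [hF0] at hA ⊢; exact add_le_add hA hB
          _ ≤ max L C * (0 - (t + σ₁)) + C * (t + σ₂) := by
              apply add_le_add
              · exact mul_le_mul_of_nonneg_right hLC (by linarith)
              · exact mul_le_mul_of_nonneg_right hCkey (by linarith)
          _ ≤ max L C * (0 - (t + σ₁)) + max L C * (t + σ₂) := by
              exact add_le_add (le_refl _) (mul_le_mul_of_nonneg_right hCC (by linarith))
          _ = max L C * (σ₂ - σ₁) := by ring
          _ = max L C * |σ₁ - σ₂| := by rw [habs]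
    · -- both nonpositive: use Lipschitz of F
      push_neg at h2
      have h1 : t + σ₁ ≤ 0 := by linarith
      simp only [histFun, if_neg (not_lt.2 h1), if_neg (not_lt.2 h2)]
      have hm1 : t + σ₁ ∈ Set.Icc (-1:ℝ) 0 := ⟨by linarith [hσ₁.1], h1⟩
      have hm2 : t + σ₂ ∈ Set.Icc (-1:ℝ) 0 := ⟨by linarith [hσ₂.1], h2⟩
      have := hLip (t + σ₁) hm1 (t + σ₂) hm2
      have heq : |t + σ₁ - (t + σ₂)| = |σ₁ - σ₂| := by ring_nf
      rw [heq] at this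
      exact le_trans this (mul_le_mul_of_nonneg_right hLC (abs_nonneg _))
  rcases le_total σ₁ σ₂ with h | h
  · exact main σ₁ hσ₁ σ₂ hσ₂ h
  · have := main σ₂ hσ₂ σ₁ hσ₁ h
    rwa [norm_sub_rev, abs_sub_comm] at this

end
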